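/- For integers 1 ≤ d₀ ≤ d ≤ n, fixed T > 0, y > 0 and integer 0 ≤ ν ≤ d, the limit as θ → ∞ of G({dy − (n−d+ν)T}/θ ; d) / P_θ(D ≥ d₀) equals 0 if d > d₀, and equals ((n−d₀)!/n!) · (max{d₀y − (n−d₀+ν)T, 0})^{d₀} / T^{d₀} if d = d₀. -/

import Mathlib

open Filter Set Topology

/-- CDF of the gamma distribution with integer shape d ≥ 1 and scale 1. -/
noncomputable def gammaCDF (x : ℝ) (d : ℕ) : ℝ :=
  (∫ u in (0:ℝ)..(max x 0), u ^ (d - 1) * Real.exp (-u)) / (Nat.factorial (d - 1))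

/-- P_θ(D ≥ d₀) where D ~ Binomial(n, 1 − e^{−T/θ}). -/
noncomputable def probDge (n d0 : ℕ) (T θ : ℝ) : ℝ :=
  ∑ j ∈ Finset.Icc d0 n,
    (n.choose j : ℝ) * (1 - Real.exp (-T / θ)) ^ j * Real.exp (-((n:ℝ) - j) * T / θ)


lemma aux_slope (T : ℝ) (hT : 0 < T) :
    Tendsto (fun θ : ℝ => θ * (1 - Real.exp (-T / θ))) atTop (nhds T) := by
  have hderiv : HasDerivAt (fun s : ℝ => 1 - Real.exp (-s)) 1 0 := by
    have h1 : HasDerivAt (fun s : ℝ => Real.exp (-s)) (-1) 0 := by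
      simpa [Function.comp_def] using (Real.hasDerivAt_exp (-0 : ℝ)).comp 0 (hasDerivAt_neg (0:ℝ))
    simpa using h1.const_sub 1
  have hslope := hasDerivAt_iff_tendsto_slope.mp hderiv
  -- slope f 0 s = (f s - f 0)/(s - 0)
  have hcomp : Tendsto (fun θ : ℝ => T / θ) atTop (𝓝[≠] (0:ℝ)) := by
    apply tendsto_nhdsWithin_of_tendsto_nhds_of_eventually_within
    · simpa using tendsto_const_nhds.div_atTop (f := fun _ : ℝ => T) tendsto_id
    · filter_upwards [eventually_gt_atTop (0:ℝ)] with θ hθ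
      exact (div_pos hT hθ).ne'
  have := hslope.comp hcomp
  have h2 : Tendsto (fun θ : ℝ => T * slope (fun s : ℝ => 1 - Real.exp (-s)) 0 (T / θ))
      atTop (nhds (T * 1)) := this.const_mul T
  rw [mul_one] at h2
  refine h2.congr' ?_
  filter_upwards [eventually_gt_atTop (0:ℝ)] with θ hθ
  simp only [slope_def_field, div_sub_div_same, neg_zero, Real.exp_zero]
  field_simp [hT.ne']
  ring


lemma exp_div_tendsto (a : ℝ) : Tendsto (fun θ : ℝ => Real.exp (a / θ)) atTop (nhds 1) := by
  have h : Tendsto (fun θ : ℝ => a / θ) atTop (nhds 0) :=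
    tendsto_const_nhds.div_atTop tendsto_id
  simpa [Function.comp_def] using (Real.continuous_exp.continuousAt (x := (0:ℝ))).tendsto.comp h

lemma denom_tendsto (n d0 : ℕ) (hd0n : d0 ≤ n) (T : ℝ) (hT : 0 < T) :
    Tendsto (fun θ : ℝ => θ ^ d0 * probDge n d0 T θ) atTop
      (nhds ((n.choose d0 : ℝ) * T ^ d0)) := by
  have key : ∀ j ∈ Finset.Icc d0 n,
      Tendsto (fun θ : ℝ => θ ^ d0 * ((n.choose j : ℝ) * (1 - Real.exp (-T / θ)) ^ j *
        Real.exp (-((n:ℝ) - j) * T / θ))) atTop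
        (nhds ((n.choose j : ℝ) * (T ^ d0 * (0:ℝ) ^ (j - d0)) * 1)) := by
    intro j hj
    have hjd : d0 ≤ j := (Finset.mem_Icc.mp hj).1
    have h1 : Tendsto (fun θ : ℝ => (θ * (1 - Real.exp (-T / θ))) ^ d0 *
        (1 - Real.exp (-T / θ)) ^ (j - d0)) atTop (nhds (T ^ d0 * (0:ℝ) ^ (j - d0))) := by
      have ha := (aux_slope T hT).pow d0
      have hb : Tendsto (fun θ : ℝ => (1 - Real.exp (-T / θ))) atTop (nhds 0) := by
        have := exp_div_tendsto (-T)
        have h := (tendsto_const_nhds (x := (1:ℝ)) (f := atTop)).sub this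
        simpa [neg_div] using h
      exact ha.mul (hb.pow (j - d0))
    have h2 : Tendsto (fun θ : ℝ => Real.exp (-((n:ℝ) - j) * T / θ)) atTop (nhds 1) := by
      simpa [div_eq_mul_inv, mul_assoc] using exp_div_tendsto (-((n:ℝ) - j) * T)
    have := (h1.const_mul (n.choose j : ℝ)).mul h2
    refine this.congr' ?_
    filter_upwards [eventually_gt_atTop (0:ℝ)] with θ hθ
    have hp : (1 - Real.exp (-T / θ)) ^ d0 * (1 - Real.exp (-T / θ)) ^ (j - d0)
        = (1 - Real.exp (-T / θ)) ^ j := by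
      rw [← pow_add]; congr 1; omega
    rw [mul_pow, mul_assoc (θ ^ d0), hp]
    ring
  have hsum := tendsto_finset_sum _ key
  have hval : ∑ j ∈ Finset.Icc d0 n, (n.choose j : ℝ) * (T ^ d0 * (0:ℝ) ^ (j - d0)) * 1
      = (n.choose d0 : ℝ) * T ^ d0 := by
    rw [Finset.sum_eq_single d0]
    · simp
    · intro j hj hne
      have hjd : d0 ≤ j := (Finset.mem_Icc.mp hj).1
      have : 0 < j - d0 := by omega
      simp [zero_pow (by omega : j - d0 ≠ 0)]
    · intro h
      exact absurd (Finset.mem_Icc.mpr ⟨le_refl d0, hd0n⟩) h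
  rw [← hval]
  refine hsum.congr ?_
  intro θ
  simp [probDge, Finset.mul_sum]


lemma integral_pow_eval (d : ℕ) (hd : 1 ≤ d) (x : ℝ) :
    ∫ u in (0:ℝ)..x, u ^ (d - 1) = x ^ d / d := by
  rw [integral_pow, zero_pow (by omega : d - 1 + 1 ≠ 0), sub_zero]
  have h : d - 1 + 1 = d := by omega
  rw [show ((d - 1 : ℕ) : ℝ) + 1 = (d : ℝ) by rw [← Nat.cast_add_one, h], h]

lemma gamma_int_le (d : ℕ) (hd : 1 ≤ d) (x : ℝ) (hx : 0 ≤ x) :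
    ∫ u in (0:ℝ)..x, u ^ (d - 1) * Real.exp (-u) ≤ x ^ d / d := by
  rw [← integral_pow_eval d hd x]
  apply intervalIntegral.integral_mono_on hx
  · exact (Continuous.intervalIntegrable (by continuity) _ _)
  · exact (Continuous.intervalIntegrable (by continuity) _ _)
  · intro u hu
    have h0 : 0 ≤ u := hu.1
    have : Real.exp (-u) ≤ 1 := Real.exp_le_one_iff.mpr (by linarith)
    calc u ^ (d-1) * Real.exp (-u) ≤ u ^ (d-1) * 1 := by
          exact mul_le_mul_of_nonneg_left this (pow_nonneg h0 _)
      _ = u ^ (d-1) := mul_one _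

lemma gamma_int_ge (d : ℕ) (hd : 1 ≤ d) (x : ℝ) (hx : 0 ≤ x) :
    Real.exp (-x) * (x ^ d / d) ≤ ∫ u in (0:ℝ)..x, u ^ (d - 1) * Real.exp (-u) := by
  have : Real.exp (-x) * (x ^ d / d)
      = ∫ u in (0:ℝ)..x, Real.exp (-x) * u ^ (d - 1) := by
    rw [intervalIntegral.integral_const_mul, integral_pow_eval d hd x]
  rw [this]
  apply intervalIntegral.integral_mono_on hx
  · exact (Continuous.intervalIntegrable (by continuity) _ _)
  · exact (Continuous.intervalIntegrable (by continuity) _ _)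
  · intro u hu
    have : Real.exp (-x) ≤ Real.exp (-u) := Real.exp_le_exp.mpr (by linarith [hu.2])
    calc Real.exp (-x) * u ^ (d-1) ≤ Real.exp (-u) * u ^ (d-1) :=
          mul_le_mul_of_nonneg_right this (pow_nonneg hu.1 _)
      _ = u ^ (d-1) * Real.exp (-u) := mul_comm _ _

lemma numer_tendsto (d d0 : ℕ) (h1 : 1 ≤ d0) (h2 : d0 ≤ d) (c : ℝ) :
    Tendsto (fun θ : ℝ => θ ^ d0 * gammaCDF (c / θ) d) atTop
      (nhds (if d = d0 then (max c 0) ^ d0 / (Nat.factorial d0) else 0)) := by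
  have hd1 : 1 ≤ d := le_trans h1 h2
  rcases le_or_gt c 0 with hc | hc
  · -- c ≤ 0 : function is eventually 0
    have hzero : (fun θ : ℝ => θ ^ d0 * gammaCDF (c / θ) d) =ᶠ[atTop] fun _ => (0:ℝ) := by
      filter_upwards [eventually_gt_atTop (0:ℝ)] with θ hθ
      have : max (c / θ) 0 = 0 := max_eq_right (div_nonpos_of_nonpos_of_nonneg hc hθ.le)
      simp [gammaCDF, this]
    have : (if d = d0 then (max c 0) ^ d0 / (Nat.factorial d0) else 0) = 0 := by
      split
      · rw [max_eq_right hc, zero_pow (by omega : d0 ≠ 0), zero_div]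
      · rfl
    rw [this]
    exact Tendsto.congr' hzero.symm tendsto_const_nhds
  · -- c > 0 : squeeze
    set L : ℝ := if d = d0 then (max c 0) ^ d0 / (Nat.factorial d0) else 0 with hL
    have hmaxc : max c 0 = c := max_eq_left hc.le
    -- factorial relation: d * (d-1)! = d!
    have hfac : (d : ℝ) * (Nat.factorial (d - 1)) = Nat.factorial d := by
      rw [← Nat.cast_mul]
      congr 1
      have : d = (d - 1) + 1 := by omega
      rw [this, Nat.factorial_succ]
      simp
    have hfacpos : (0:ℝ) < Nat.factorial (d-1) := by positivity
    -- the common limit of the bounds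
    have hlim_pow : Tendsto (fun θ : ℝ => c ^ d / θ ^ (d - d0)) atTop
        (nhds (if d = d0 then c ^ d else 0)) := by
      rcases eq_or_ne d d0 with h | h
      · simp [h]
      · have hpos : 0 < d - d0 := by omega
        simp only [if_neg h]
        have : Tendsto (fun θ : ℝ => θ ^ (d - d0)) atTop atTop :=
          tendsto_pow_atTop (by omega)
        simpa using tendsto_const_nhds.div_atTop (f := fun _ : ℝ => c ^ d) this
    have hexp : Tendsto (fun θ : ℝ => Real.exp (-(c / θ))) atTop (nhds 1) := by
      have h : Tendsto (fun θ : ℝ => -(c / θ)) atTop (nhds 0) := by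
        simpa using (tendsto_const_nhds.div_atTop (f := fun _ : ℝ => c) tendsto_id).neg
      simpa [Function.comp_def] using (Real.continuous_exp.continuousAt (x := (0:ℝ))).tendsto.comp h
    -- upper bound function limit
    have hupper : Tendsto (fun θ : ℝ => c ^ d / θ ^ (d - d0) / Nat.factorial d) atTop (nhds L) := by
      have := hlim_pow.div_const (Nat.factorial d : ℝ)
      convert this using 2
      rw [hL]
      rcases eq_or_ne d d0 with h | h
      · subst h; simp [hmaxc]
      · simp [h]
    have hlower : Tendsto (fun θ : ℝ => Real.exp (-(c/θ)) * (c ^ d / θ ^ (d - d0) / Nat.factorial d))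
        atTop (nhds L) := by
      have := hexp.mul hupper
      simpa using this
    refine tendsto_of_tendsto_of_tendsto_of_le_of_le' hlower hupper ?_ ?_
    · filter_upwards [eventually_gt_atTop (0:ℝ)] with θ hθ
      have hxpos : 0 < c / θ := div_pos hc hθ
      have hge := gamma_int_ge d hd1 (c/θ) hxpos.le
      have hmax : max (c/θ) 0 = c/θ := max_eq_left hxpos.le
      rw [gammaCDF, hmax]
      have key : θ ^ d0 * (Real.exp (-(c/θ)) * ((c/θ) ^ d / d)) / Nat.factorial (d-1)
          = Real.exp (-(c/θ)) * (c ^ d / θ ^ (d - d0) / Nat.factorial d) := by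
        rw [div_pow, ← hfac]
        have hθd : θ ^ d = θ ^ (d - d0) * θ ^ d0 := by
          rw [← pow_add]; congr 1; omega
        field_simp
        rw [hθd]; ring
      rw [← key]
      have := mul_le_mul_of_nonneg_left hge (pow_nonneg hθ.le d0)
      calc θ ^ d0 * (Real.exp (-(c/θ)) * ((c/θ) ^ d / d)) / Nat.factorial (d-1)
          ≤ θ ^ d0 * (∫ u in (0:ℝ)..(c/θ), u ^ (d - 1) * Real.exp (-u)) / Nat.factorial (d-1) :=
            div_le_div_of_nonneg_right this hfacpos.le
        _ = θ ^ d0 * ((∫ u in (0:ℝ)..(c/θ), u ^ (d - 1) * Real.exp (-u)) / Nat.factorial (d-1)) := by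
            ring
    · filter_upwards [eventually_gt_atTop (0:ℝ)] with θ hθ
      have hxpos : 0 < c / θ := div_pos hc hθ
      have hle := gamma_int_le d hd1 (c/θ) hxpos.le
      have hmax : max (c/θ) 0 = c/θ := max_eq_left hxpos.le
      rw [gammaCDF, hmax]
      have key : θ ^ d0 * ((c/θ) ^ d / d) / Nat.factorial (d-1)
          = c ^ d / θ ^ (d - d0) / Nat.factorial d := by
        rw [div_pow, ← hfac]
        have hθd : θ ^ d = θ ^ (d - d0) * θ ^ d0 := by
          rw [← pow_add]; congr 1; omega
        field_simp
        rw [hθd]; ring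
      rw [← key]
      have := mul_le_mul_of_nonneg_left hle (pow_nonneg hθ.le d0)
      calc θ ^ d0 * ((∫ u in (0:ℝ)..(c/θ), u ^ (d - 1) * Real.exp (-u)) / Nat.factorial (d-1))
          = θ ^ d0 * (∫ u in (0:ℝ)..(c/θ), u ^ (d - 1) * Real.exp (-u)) / Nat.factorial (d-1) := by
            ring
        _ ≤ θ ^ d0 * ((c/θ) ^ d / d) / Nat.factorial (d-1) :=
            div_le_div_of_nonneg_right this hfacpos.le

/-- Lemma 2: the limit as θ → ∞ of G({dy − (n−d+ν)T}/θ ; d)/P_θ(D ≥ d₀) is 0 when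
d > d₀ and ((n−d₀)!/n!)·(d₀y − (n−d₀+ν)T)₊^{d₀}/T^{d₀} when d = d₀. -/
theorem gammaCDF_ratio_limit (n d d0 ν : ℕ) (h1 : 1 ≤ d0) (h2 : d0 ≤ d) (h3 : d ≤ n)
    (hν : ν ≤ d) (T : ℝ) (hT : 0 < T) (y : ℝ) (hy : 0 < y) :
    Tendsto (fun θ : ℝ =>
        gammaCDF ((d * y - ((n:ℝ) - d + ν) * T) / θ) d / probDge n d0 T θ) atTop
      (nhds (if d = d0 then
          ((Nat.factorial (n - d0) : ℝ) / (Nat.factorial n)) *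
            (max ((d0:ℝ) * y - ((n:ℝ) - d0 + ν) * T) 0) ^ d0 / T ^ d0
        else 0)) := by
  set c : ℝ := (d:ℝ) * y - ((n:ℝ) - (d:ℝ) + (ν:ℝ)) * T with hcdef
  have hd0n : d0 ≤ n := le_trans h2 h3
  have hden := denom_tendsto n d0 hd0n T hT
  have hnum := numer_tendsto d d0 h1 h2 c
  have hCne : ((n.choose d0 : ℝ) * T ^ d0) ≠ 0 := by
    have hcp : 0 < n.choose d0 := Nat.choose_pos hd0n
    positivity
  have hdiv := hnum.div hden hCne
  have heq : (fun θ : ℝ => gammaCDF (c / θ) d / probDge n d0 T θ)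
      =ᶠ[atTop] fun θ => (θ ^ d0 * gammaCDF (c / θ) d) / (θ ^ d0 * probDge n d0 T θ) := by
    filter_upwards [eventually_gt_atTop (0:ℝ)] with θ hθ
    rw [mul_div_mul_left _ _ (by positivity : θ ^ d0 ≠ 0)]
  have hval : (if d = d0 then (max c 0) ^ d0 / (Nat.factorial d0 : ℝ) else 0) /
        ((n.choose d0 : ℝ) * T ^ d0)
      = (if d = d0 then
          ((Nat.factorial (n - d0) : ℝ) / (Nat.factorial n)) *
            (max ((d0:ℝ) * y - ((n:ℝ) - d0 + ν) * T) 0) ^ d0 / T ^ d0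
        else 0) := by
    rcases eq_or_ne d d0 with h | h
    · subst h
      simp only [if_pos rfl, if_true]
      have hkey : ((n.choose d : ℕ) : ℝ) * (Nat.factorial d : ℝ) * (Nat.factorial (n - d) : ℝ)
          = (Nat.factorial n : ℝ) := by
        exact_mod_cast Nat.choose_mul_factorial_mul_factorial h3
      have hcp : 0 < n.choose d := Nat.choose_pos h3
      have hc' : max ((d:ℝ) * y - ((n:ℝ) - d + ν) * T) 0 = max c 0 := by rw [hcdef]
      rw [hc']
      have hd0 : (0:ℝ) < Nat.factorial d := by positivity
      have hn0 : (0:ℝ) < Nat.factorial n := by positivity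
      have hc0 : (0:ℝ) < (n.choose d : ℝ) := by exact_mod_cast hcp
      field_simp
      linear_combination (-((max c 0 : ℝ) ^ d)) * hkey
    · simp [h]
  rw [← hval]
  exact hdiv.congr' heq.symm
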